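/- arXiv:2112.10401 — 3 statements merged into one kernel-verified Lean document; each statement's English description precedes it below -/
import Mathlib

section
/- For any sequence of nested designs X_n = {x_1, ..., x_n} (given by a sequence of points x_1, x_2, ... in X) in a compact set X ⊂ ℝ^d with positive Lebesgue volume, one has limsup_{n→∞} MR(X_n) ≥ 2. In particular, the uniformity constant sup_n MR(X_n) of any point sequence in X is at least 2. -/
open Metric Set MeasureTheory

/-- Distance from a point `x` to the nearest point of the design `D`. -/
noncomputable def minDist {E : Type*} [NormedAddCommGroup E] (D : Finset E) (x : E) : ℝ :=
  sInf ((fun p => dist x p) '' (D : Set E))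

/-- Fill distance (covering radius) of the design `D` for the set `A`:
`CR_A(D) = sup_{x ∈ A} min_{p ∈ D} ‖x - p‖`. -/
noncomputable def fillDist {E : Type*} [NormedAddCommGroup E] (A : Set E) (D : Finset E) : ℝ :=
  sSup ((fun x => minDist D x) '' A)

/-- Separation radius of the design `D`:
`SR(D) = (1/2) min_{p ≠ q ∈ D} ‖p - q‖`. -/
noncomputable def sepRad {E : Type*} [NormedAddCommGroup E] (D : Finset E) : ℝ :=
  (1 / 2) * sInf ((fun p : E × E => dist p.1 p.2) '' {p | p.1 ∈ D ∧ p.2 ∈ D ∧ p.1 ≠ p.2})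

/-- Mesh-ratio of the design `D` for the set `A`: `MR(D) = CR_A(D) / SR(D)`. -/
noncomputable def meshRatio {E : Type*} [NormedAddCommGroup E] (A : Set E) (D : Finset E) : ℝ :=
  fillDist A D / sepRad D

/-- The nested design consisting of the first `n` points of the sequence `x`. -/
noncomputable def design {E : Type*} (x : ℕ → E) (n : ℕ) : Finset E :=
  letI := Classical.decEq E
  (Finset.range n).image x

set_option linter.unusedSectionVars false

section Aux
variable {E : Type*} [NormedAddCommGroup E]

lemma minDist_le {D : Finset E} {p : E} (hp : p ∈ D) (y : E) : minDist D y ≤ dist y p := by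
  refine csInf_le ?_ ⟨p, hp, rfl⟩
  exact (((D : Set E).toFinite.image _).bddBelow)

lemma exists_minDist {D : Finset E} (hD : D.Nonempty) (y : E) :
    ∃ p ∈ D, minDist D y = dist y p := by
  have h : minDist D y ∈ (fun p => dist y p) '' (D : Set E) := by
    apply Set.Nonempty.csInf_mem
    · exact (Set.Nonempty.image _ hD.to_set)
    · exact ((D : Set E).toFinite.image _)
  obtain ⟨p, hp, hpe⟩ := h
  exact ⟨p, hp, hpe.symm⟩

lemma minDist_nonneg {D : Finset E} (hD : D.Nonempty) (y : E) : 0 ≤ minDist D y := by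
  obtain ⟨p, _, hpe⟩ := exists_minDist hD y
  rw [hpe]; exact dist_nonneg

end Aux

section Aux2
variable {E : Type*} [NormedAddCommGroup E] {A : Set E} {D : Finset E}

lemma bddAbove_minDist_image (hA : Bornology.IsBounded A) {p₀ : E} (hp₀ : p₀ ∈ D) :
    BddAbove ((fun y => minDist D y) '' A) := by
  obtain ⟨r, hr⟩ := hA.subset_closedBall p₀
  refine ⟨r, ?_⟩
  rintro z ⟨y, hy, rfl⟩
  exact (minDist_le hp₀ y).trans (by simpa [dist_comm] using mem_closedBall.1 (hr hy))

lemma le_fillDist (hA : Bornology.IsBounded A) {p₀ : E} (hp₀ : p₀ ∈ D) {y : E} (hy : y ∈ A) :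
    minDist D y ≤ fillDist A D :=
  le_csSup (bddAbove_minDist_image hA hp₀) ⟨y, hy, rfl⟩

lemma fillDist_nonneg (hD : D.Nonempty) (hA : Bornology.IsBounded A) {y : E} (hy : y ∈ A) :
    0 ≤ fillDist A D :=
  (minDist_nonneg hD y).trans (le_fillDist hA hD.choose_spec hy)

lemma sepRad_le {p q : E} (hp : p ∈ D) (hq : q ∈ D) (hpq : p ≠ q) :
    sepRad D ≤ dist p q / 2 := by
  have h : sInf ((fun p : E × E => dist p.1 p.2) '' {p | p.1 ∈ D ∧ p.2 ∈ D ∧ p.1 ≠ p.2})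
      ≤ dist p q := by
    refine csInf_le ⟨0, ?_⟩ ⟨(p, q), ⟨hp, hq, hpq⟩, rfl⟩
    rintro z ⟨u, _, rfl⟩; exact dist_nonneg
  rw [sepRad]; linarith

lemma sepRad_pos {p q : E} (hp : p ∈ D) (hq : q ∈ D) (hpq : p ≠ q) : 0 < sepRad D := by
  have hfin : ((fun p : E × E => dist p.1 p.2) ''
      {p | p.1 ∈ D ∧ p.2 ∈ D ∧ p.1 ≠ p.2}).Finite := by
    refine Set.Finite.image _ (Set.Finite.subset (D.finite_toSet.prod D.finite_toSet) ?_)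
    rintro ⟨u, v⟩ ⟨hu, hv, _⟩; exact ⟨hu, hv⟩
  have hne : ((fun p : E × E => dist p.1 p.2) ''
      {p | p.1 ∈ D ∧ p.2 ∈ D ∧ p.1 ≠ p.2}).Nonempty := ⟨_, ⟨(p, q), ⟨hp, hq, hpq⟩, rfl⟩⟩
  have hmem := hne.csInf_mem hfin
  obtain ⟨⟨u, v⟩, ⟨_, _, huv⟩, heq⟩ := hmem
  have : 0 < dist u v := dist_pos.2 huv
  simp only at heq
  rw [sepRad, ← heq]; linarith

end Aux2

section Design
variable {E : Type*} [NormedAddCommGroup E] {x : ℕ → E}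

lemma mem_design {i n : ℕ} (h : i < n) : x i ∈ design x n := by
  classical
  simp only [design]
  convert Finset.mem_image_of_mem x (Finset.mem_range.2 h) using 2

lemma design_mem_iff {p : E} {n : ℕ} : p ∈ design x n ↔ ∃ i < n, x i = p := by
  classical
  simp only [design]
  constructor
  · intro hp
    have := Finset.mem_image.1 (by convert hp using 2)
    simpa using this
  · rintro ⟨i, hi, rfl⟩; exact mem_design hi

lemma card_design (hinj : Function.Injective x) (n : ℕ) : (design x n).card = n := by
  classical
  simp only [design]
  rw [show (Finset.range n).image x = @Finset.image _ _ (Classical.decEq E) x (Finset.range n)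
    from by congr]
  rw [Finset.card_image_of_injective _ hinj, Finset.card_range]

end Design

/-- For any sequence of nested designs `design x n = {x 1, …, x n}` in a
compact set `S ⊆ ℝ^d` (a `d`-dimensional real normed space) with positive volume,
`limsup_{n → ∞} MR(Xₙ) ≥ 2` (expressed via the "frequently" characterization), and in
particular the uniformity constant `sup_n MR(Xₙ)` of any point sequence in `S` is at least 2. -/
theorem statement0 {d : ℕ} (hd : 1 ≤ d)
    {E : Type*} [NormedAddCommGroup E] [NormedSpace ℝ E] [FiniteDimensional ℝ E]
    [MeasurableSpace E] [BorelSpace E] (hdim : Module.finrank ℝ E = d)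
    (S : Set E) (hS : IsCompact S) (hvol : 0 < (Measure.addHaar : Measure E) S)
    (x : ℕ → E) (hinj : Function.Injective x) (hmem : ∀ n, x n ∈ S) :
    (∀ r : ℝ, r < 2 → ∀ n₀ : ℕ, ∃ n, n₀ ≤ n ∧ 2 ≤ n ∧ r < meshRatio S (design x n)) ∧
    (∀ b : ℝ, (∀ n, 2 ≤ n → meshRatio S (design x n) ≤ b) → 2 ≤ b) := by
  classical
  set μ : Measure E := Measure.addHaar with hμ
  have hSb : Bornology.IsBounded S := hS.isBounded
  set CR : ℕ → ℝ := fun n => fillDist S (design x n) with hCRdef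
  set SR : ℕ → ℝ := fun n => sepRad (design x n) with hSRdef
  have hDne : ∀ n, 1 ≤ n → (design x n).Nonempty := fun n hn => ⟨x 0, mem_design hn⟩
  have hCR0 : ∀ n, 1 ≤ n → 0 ≤ CR n := fun n hn =>
    fillDist_nonneg (hDne n hn) hSb (hmem 0)
  have hSRpos : ∀ n, 2 ≤ n → 0 < SR n := fun n hn =>
    sepRad_pos (mem_design (by omega : 0 < n)) (mem_design (by omega : 1 < n))
      (hinj.ne (by norm_num))
  -- volume bound
  have hB : 0 < μ (ball (0:E) 1) := measure_ball_pos _ _ one_pos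
  have hBt : μ (ball (0:E) 1) ≠ ⊤ := measure_ball_lt_top.ne
  set B : ℝ := (μ (ball (0:E) 1)).toReal with hBdef
  have hBpos : 0 < B := ENNReal.toReal_pos hB.ne' hBt
  set K : ℝ := (μ S).toReal with hKdef
  have hKpos : 0 < K := ENNReal.toReal_pos hvol.ne' (hS.measure_lt_top).ne
  have key : ∀ n : ℕ, 1 ≤ n → K ≤ (n : ℝ) * CR n ^ d * B := by
    intro n hn
    have cover : S ⊆ ⋃ p ∈ design x n, closedBall p (CR n) := by
      intro y hy
      obtain ⟨p, hp, he⟩ := exists_minDist (hDne n hn) y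
      have : dist y p ≤ CR n := he ▸ le_fillDist hSb hp hy
      exact Set.mem_biUnion hp (mem_closedBall.2 this)
    have h1 : μ S ≤ ∑ p ∈ design x n, μ (closedBall p (CR n)) :=
      le_trans (measure_mono cover) (measure_biUnion_finset_le _ _)
    have h2 : ∀ p ∈ design x n,
        μ (closedBall p (CR n)) = ENNReal.ofReal (CR n ^ d) * μ (ball (0:E) 1) := by
      intro p _
      rw [hμ, Measure.addHaar_closedBall _ p (hCR0 n hn), hdim]
    rw [Finset.sum_congr rfl h2, Finset.sum_const, card_design hinj] at h1
    have h3 : μ S ≤ (n : ENNReal) * (ENNReal.ofReal (CR n ^ d) * μ (ball (0:E) 1)) := by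
      simpa [nsmul_eq_mul] using h1
    have hfin : (n : ENNReal) * (ENNReal.ofReal (CR n ^ d) * μ (ball (0:E) 1)) ≠ ⊤ := by
      refine ENNReal.mul_ne_top (by simp) (ENNReal.mul_ne_top ENNReal.ofReal_ne_top hBt)
    have := ENNReal.toReal_mono hfin h3
    rw [ENNReal.toReal_mul, ENNReal.toReal_mul, ENNReal.toReal_natCast,
      ENNReal.toReal_ofReal (pow_nonneg (hCR0 n hn) d)] at this
    calc K ≤ (n : ℝ) * (CR n ^ d * B) := this
      _ = (n : ℝ) * CR n ^ d * B := by ring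
  -- separation vs previous fill distance
  have chain : ∀ n, 1 ≤ n → SR (n + 1) ≤ CR n / 2 := by
    intro n hn
    obtain ⟨p, hp, he⟩ := exists_minDist (hDne n hn) (x n)
    obtain ⟨i, hi, rfl⟩ := design_mem_iff.1 hp
    have hne : x n ≠ x i := hinj.ne (by omega)
    have h1 : SR (n + 1) ≤ dist (x n) (x i) / 2 :=
      sepRad_le (mem_design (by omega)) (mem_design (by omega)) hne
    have h2 : dist (x n) (x i) ≤ CR n := by
      rw [← he]; exact le_fillDist hSb hp (hmem n)
    linarith
  have main : ∀ r : ℝ, r < 2 → ∀ n₀ : ℕ, ∃ n, n₀ ≤ n ∧ 2 ≤ n ∧ r < meshRatio S (design x n) := by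
    intro r hr n₀
    by_contra hcon
    push_neg at hcon
    set N : ℕ := max n₀ 2 with hN
    have hN2 : 2 ≤ N := le_max_right _ _
    have hallN : ∀ n, N ≤ n → meshRatio S (design x n) ≤ r := fun n hn =>
      hcon n (le_trans (le_max_left _ _) hn) (le_trans hN2 hn)
    have hr0 : 0 ≤ r := by
      refine le_trans ?_ (hallN N le_rfl)
      exact div_nonneg (hCR0 N (by omega)) (hSRpos N hN2).le
    set q : ℝ := r / 2 with hq
    have hq0 : 0 ≤ q := by positivity
    have hq1 : q < 1 := by rw [hq]; linarith
    have decay : ∀ n, N ≤ n → CR (n + 1) ≤ q * CR n := by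
      intro n hn
      have hSRn : 0 < SR (n + 1) := hSRpos _ (by omega)
      have hMR : meshRatio S (design x (n + 1)) ≤ r := hallN _ (by omega)
      have heq : CR (n + 1) = meshRatio S (design x (n + 1)) * SR (n + 1) := by
        rw [meshRatio]; field_simp
        exact (mul_div_cancel_right₀ _ hSRn.ne').symm
      calc CR (n + 1) = meshRatio S (design x (n + 1)) * SR (n + 1) := heq
        _ ≤ r * SR (n + 1) := mul_le_mul_of_nonneg_right hMR hSRn.le
        _ ≤ r * (CR n / 2) := mul_le_mul_of_nonneg_left (chain n (by omega)) hr0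
        _ = q * CR n := by rw [hq]; ring
    have geo : ∀ k : ℕ, CR (N + k) ≤ q ^ k * CR N := by
      intro k
      induction k with
      | zero => simp
      | succ k ih =>
        calc CR (N + (k + 1)) = CR ((N + k) + 1) := by ring_nf
          _ ≤ q * CR (N + k) := decay _ (by omega)
          _ ≤ q * (q ^ k * CR N) := mul_le_mul_of_nonneg_left ih hq0
          _ = q ^ (k + 1) * CR N := by ring
    -- lower bound vs geometric decay
    set s : ℝ := q ^ d with hs
    have hs0 : 0 ≤ s := pow_nonneg hq0 d
    have hs1 : s < 1 := pow_lt_one₀ hq0 hq1 (by omega)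
    set C : ℝ := CR N ^ d * B with hC
    have keyk : ∀ k : ℕ, K ≤ ((N : ℝ) + k) * s ^ k * C := by
      intro k
      have h1 : K ≤ ((N + k : ℕ) : ℝ) * CR (N + k) ^ d * B := key _ (by omega)
      have h2 : CR (N + k) ^ d ≤ (q ^ k * CR N) ^ d :=
        pow_le_pow_left₀ (hCR0 _ (by omega)) (geo k) d
      have h3 : ((N + k : ℕ) : ℝ) * CR (N + k) ^ d * B
          ≤ ((N + k : ℕ) : ℝ) * (q ^ k * CR N) ^ d * B := by
        have hc : (0:ℝ) ≤ ((N + k : ℕ) : ℝ) := Nat.cast_nonneg _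
        exact mul_le_mul_of_nonneg_right (mul_le_mul_of_nonneg_left h2 hc) hBpos.le
      refine le_trans h1 (le_trans h3 (le_of_eq ?_))
      push_cast
      rw [hC, hs, mul_pow, ← pow_mul, ← pow_mul, Nat.mul_comm]
      ring
    have hlim : Filter.Tendsto (fun k : ℕ => ((N : ℝ) + k) * s ^ k * C)
        Filter.atTop (nhds 0) := by
      have h1 : Filter.Tendsto (fun k : ℕ => (k : ℝ) ^ 1 * s ^ k) Filter.atTop (nhds 0) :=
        tendsto_pow_const_mul_const_pow_of_lt_one 1 hs0 hs1
      have h2 : Filter.Tendsto (fun k : ℕ => s ^ k) Filter.atTop (nhds 0) :=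
        tendsto_pow_atTop_nhds_zero_of_lt_one hs0 hs1
      have h3 : Filter.Tendsto (fun k : ℕ => ((N : ℝ) + k) * s ^ k) Filter.atTop (nhds 0) := by
        have := (h2.const_mul (N : ℝ)).add (by simpa using h1)
        simpa [add_mul] using this
      simpa using h3.mul_const C
    have : K ≤ 0 := ge_of_tendsto' hlim keyk
    linarith
  refine ⟨main, fun b hb => ?_⟩
  by_contra hb2
  push_neg at hb2
  obtain ⟨n, _, hn2, hgt⟩ := main b hb2 0
  exact absurd (hb n hn2) (not_le.2 hgt)
end

section
/- Let X_n be an n-point design in a compact set X ⊂ ℝ^d and let X_m ⊆ X_n be any sub-design with m points, where n ≥ m ≥ 2. Then the separation radius satisfies SR(X_n) ≤ (vol(X_0)/V_d)^{1/d} · n^{-1/d}, where X_0 = X ⊕ B(0, SR(X_m)) is the Minkowski sum of X with the closed ball of radius SR(X_m). -/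
open Metric Set MeasureTheory Pointwise
open scoped ENNReal

lemma sepRad_nonneg_aux {E : Type*} [NormedAddCommGroup E] (D : Finset E)
    (h : 2 ≤ D.card) : 0 ≤ sepRad D := by
  unfold sepRad
  have hne : ((fun p : E × E => dist p.1 p.2) ''
      {p | p.1 ∈ D ∧ p.2 ∈ D ∧ p.1 ≠ p.2}).Nonempty := by
    obtain ⟨a, ha, b, hb, hab⟩ := Finset.one_lt_card.1 h
    exact ⟨dist a b, ⟨(a, b), ⟨ha, hb, hab⟩, rfl⟩⟩
  have : 0 ≤ sInf ((fun p : E × E => dist p.1 p.2) ''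
      {p | p.1 ∈ D ∧ p.2 ∈ D ∧ p.1 ≠ p.2}) :=
    le_csInf hne (by rintro x ⟨p, _, rfl⟩; exact dist_nonneg)
  linarith

lemma sepRad_le_dist {E : Type*} [NormedAddCommGroup E] (D : Finset E)
    {p q : E} (hp : p ∈ D) (hq : q ∈ D) (hpq : p ≠ q) :
    2 * sepRad D ≤ dist p q := by
  unfold sepRad
  have hbdd : BddBelow ((fun p : E × E => dist p.1 p.2) ''
      {p | p.1 ∈ D ∧ p.2 ∈ D ∧ p.1 ≠ p.2}) :=
    ⟨0, by rintro x ⟨r, _, rfl⟩; exact dist_nonneg⟩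
  have := csInf_le hbdd (⟨(p, q), ⟨hp, hq, hpq⟩, rfl⟩ :
    dist p q ∈ (fun p : E × E => dist p.1 p.2) '' {p | p.1 ∈ D ∧ p.2 ∈ D ∧ p.1 ≠ p.2})
  linarith

lemma sepRad_anti {E : Type*} [NormedAddCommGroup E] {D Dm : Finset E}
    (hsub : Dm ⊆ D) (h : 2 ≤ Dm.card) : sepRad D ≤ sepRad Dm := by
  unfold sepRad
  have hne : ((fun p : E × E => dist p.1 p.2) ''
      {p | p.1 ∈ Dm ∧ p.2 ∈ Dm ∧ p.1 ≠ p.2}).Nonempty := by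
    obtain ⟨a, ha, b, hb, hab⟩ := Finset.one_lt_card.1 h
    exact ⟨dist a b, ⟨(a, b), ⟨ha, hb, hab⟩, rfl⟩⟩
  have hbdd : BddBelow ((fun p : E × E => dist p.1 p.2) ''
      {p | p.1 ∈ D ∧ p.2 ∈ D ∧ p.1 ≠ p.2}) :=
    ⟨0, by rintro x ⟨r, _, rfl⟩; exact dist_nonneg⟩
  have hss : (fun p : E × E => dist p.1 p.2) '' {p | p.1 ∈ Dm ∧ p.2 ∈ Dm ∧ p.1 ≠ p.2} ⊆
      (fun p : E × E => dist p.1 p.2) '' {p | p.1 ∈ D ∧ p.2 ∈ D ∧ p.1 ≠ p.2} :=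
    image_mono (by rintro ⟨a, b⟩ ⟨ha, hb, hab⟩; exact ⟨hsub ha, hsub hb, hab⟩)
  have := csInf_le_csInf hbdd hne hss
  linarith

/-- Let `D` be an `n`-point design in a compact set `S ⊆ ℝ^d` and `Dm ⊆ D`
any sub-design with `m` points, `n ≥ m ≥ 2`. Then
`SR(D) ≤ (vol(S ⊕ B(0, SR(Dm)))/V_d)^(1/d) · n^(-1/d)`, where `⊕` is the Minkowski sum. -/
theorem statement2 {d : ℕ} (hd : 1 ≤ d)
    {E : Type*} [NormedAddCommGroup E] [NormedSpace ℝ E] [FiniteDimensional ℝ E]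
    [MeasurableSpace E] [BorelSpace E] (hdim : Module.finrank ℝ E = d)
    (S : Set E) (hS : IsCompact S)
    (n m : ℕ) (hm : 2 ≤ m) (hmn : m ≤ n)
    (D Dm : Finset E) (hDS : ↑D ⊆ S) (hDcard : D.card = n)
    (hsub : Dm ⊆ D) (hDmcard : Dm.card = m) :
    sepRad D ≤
      (((Measure.addHaar : Measure E) (S + Metric.closedBall (0 : E) (sepRad Dm))).toReal /
          ((Measure.addHaar : Measure E) (Metric.closedBall (0 : E) 1)).toReal) ^ ((1 : ℝ) / d) *
        (n : ℝ) ^ (-(1 : ℝ) / d) := by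
  classical
  set μ : Measure E := Measure.addHaar with hμ
  set X0 : Set E := S + Metric.closedBall (0 : E) (sepRad Dm) with hX0
  set A : ℝ := (μ X0).toReal with hA
  set V : ℝ := (μ (Metric.closedBall (0 : E) 1)).toReal with hV
  have hn2 : 2 ≤ n := hm.trans hmn
  have hnpos : (0 : ℝ) < n := by positivity
  have hRDm : sepRad D ≤ sepRad Dm := sepRad_anti hsub (hDmcard ▸ hm)
  -- finiteness and positivity facts
  have hX0c : IsCompact X0 := hS.add (isCompact_closedBall 0 _)
  have hX0fin : μ X0 ≠ ⊤ := hX0c.measure_lt_top.ne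
  have hBfin : μ (Metric.closedBall (0 : E) 1) ≠ ⊤ :=
    (isCompact_closedBall 0 1).measure_lt_top.ne
  have hVpos : 0 < V := by
    rw [hV]
    exact ENNReal.toReal_pos (measure_closedBall_pos μ 0 one_pos).ne' hBfin
  have hAnn : 0 ≤ A := ENNReal.toReal_nonneg
  have hc : 0 ≤ (A / V) ^ ((1 : ℝ) / d) * (n : ℝ) ^ (-(1 : ℝ) / d) := by positivity
  refine le_of_forall_lt_imp_le_of_dense fun r hr => ?_
  rcases le_or_gt r 0 with hr0 | hr0
  · exact hr0.trans hc
  -- main case: 0 < r < sepRad D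
  have hrDm : r ≤ sepRad Dm := (hr.le.trans hRDm)
  -- disjoint balls
  have hdisj : (↑D : Set E).PairwiseDisjoint fun p => Metric.closedBall p r := by
    intro p hp q hq hpq
    have h2 : 2 * sepRad D ≤ dist p q := sepRad_le_dist D hp hq hpq
    exact closedBall_disjoint_closedBall (by linarith)
  have hmeas : μ (⋃ p ∈ D, Metric.closedBall p r) =
      ∑ p ∈ D, μ (Metric.closedBall p r) :=
    measure_biUnion_finset hdisj fun p _ => measurableSet_closedBall
  have hball : ∀ p : E, μ (Metric.closedBall p r) =
      ENNReal.ofReal (r ^ d) * μ (Metric.closedBall (0 : E) 1) := by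
    intro p
    rw [hμ, Measure.addHaar_closedBall' _ p hr0.le, hdim]
  have hsubX0 : (⋃ p ∈ D, Metric.closedBall p r) ⊆ X0 := by
    rintro y hy
    simp only [mem_iUnion] at hy
    obtain ⟨p, hp, hyp⟩ := hy
    refine ⟨p, hDS hp, y - p, ?_, by simp⟩
    simp only [Metric.mem_closedBall, dist_zero_right] at *
    calc ‖y - p‖ = dist y p := by rw [dist_eq_norm]
    _ ≤ r := hyp
    _ ≤ sepRad Dm := hrDm
  have hkey : (n : ℝ≥0∞) * (ENNReal.ofReal (r ^ d) * μ (Metric.closedBall (0 : E) 1)) ≤ μ X0 := by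
    calc (n : ℝ≥0∞) * (ENNReal.ofReal (r ^ d) * μ (Metric.closedBall (0 : E) 1))
        = ∑ p ∈ D, μ (Metric.closedBall p r) := by
          simp [hball, Finset.sum_const, hDcard, mul_comm]
      _ = μ (⋃ p ∈ D, Metric.closedBall p r) := hmeas.symm
      _ ≤ μ X0 := measure_mono hsubX0
  -- pass to reals
  have hlhsfin : (n : ℝ≥0∞) * (ENNReal.ofReal (r ^ d) * μ (Metric.closedBall (0 : E) 1)) ≠ ⊤ := by
    exact ENNReal.mul_ne_top (ENNReal.natCast_ne_top n)
      (ENNReal.mul_ne_top ENNReal.ofReal_ne_top hBfin)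
  have hreal : (n : ℝ) * (r ^ d * V) ≤ A := by
    have := ENNReal.toReal_mono hX0fin hkey
    simpa [ENNReal.toReal_mul,
      ENNReal.toReal_ofReal (le_of_lt (by positivity : (0:ℝ) < r ^ d))] using this
  have hpow : r ^ d ≤ A / ((n : ℝ) * V) := by
    rw [le_div_iff₀ (by positivity)]
    linarith [hreal]
  have hd0 : (d : ℝ) ≠ 0 := by positivity
  have hr' : r = (r ^ d) ^ ((1 : ℝ) / d) := by
    rw [← Real.rpow_natCast r d, ← Real.rpow_mul hr0.le]
    rw [mul_one_div, div_self hd0, Real.rpow_one]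
  calc r = (r ^ d) ^ ((1 : ℝ) / d) := hr'
    _ ≤ (A / ((n : ℝ) * V)) ^ ((1 : ℝ) / d) :=
        Real.rpow_le_rpow (by positivity) hpow (by positivity)
    _ = (A / V) ^ ((1 : ℝ) / d) * (n : ℝ) ^ (-(1 : ℝ) / d) := by
        rw [neg_div, Real.rpow_neg hnpos.le, ← Real.inv_rpow hnpos.le,
          ← Real.mul_rpow (by positivity) (by positivity)]
        congr 1
        field_simp
end

section
/- For any quasi-uniform sequence of nested designs X_n with uniformity constant ρ (i.e., MR(X_n) ≤ ρ for all n ≥ 2) in a compact set X ⊂ ℝ^d with vol(X) > 0, there exist positive constants c_1 and c_2 such that c_1 · n^{-1/d} ≤ CR(X_n) ≤ ρ · SR(X_n) ≤ c_2 · n^{-1/d} for all n ≥ 2. -/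
open Metric Set MeasureTheory ENNReal

theorem rpow_aux' {d : ℕ} {K : ℝ} (hK : 0 ≤ K) (n : ℕ) (hn : 1 ≤ n) :
    K ^ ((1:ℝ)/d) * (n : ℝ) ^ (-(1:ℝ)/d) = (K / n) ^ ((1:ℝ)/d) := by
  have hn0 : (0:ℝ) < n := by exact_mod_cast hn
  rw [neg_div, Real.rpow_neg hn0.le, ← Real.inv_rpow hn0.le,
    ← Real.mul_rpow hK (by positivity), ← div_eq_mul_inv]

theorem rpow_cancel' {d : ℕ} (hd : 1 ≤ d) {a : ℝ} (ha : 0 ≤ a) : (a ^ d) ^ ((1:ℝ)/d) = a := by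
  have hd0 : (d:ℝ) ≠ 0 := by positivity
  rw [← Real.rpow_natCast a d, ← Real.rpow_mul ha, mul_one_div, div_self hd0, Real.rpow_one]

theorem aux_lower' {d : ℕ} (hd : 1 ≤ d) {a K : ℝ} (ha : 0 ≤ a) (hK : 0 ≤ K) (n : ℕ) (hn : 1 ≤ n)
    (h : K / n ≤ a ^ d) : K ^ ((1:ℝ)/d) * (n : ℝ) ^ (-(1:ℝ)/d) ≤ a := by
  rw [rpow_aux' hK n hn, ← rpow_cancel' hd ha]
  exact Real.rpow_le_rpow (by positivity) h (by positivity)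

theorem aux_upper' {d : ℕ} (hd : 1 ≤ d) {a K : ℝ} (ha : 0 ≤ a) (hK : 0 ≤ K) (n : ℕ) (hn : 1 ≤ n)
    (h : a ^ d ≤ K / n) : a ≤ K ^ ((1:ℝ)/d) * (n : ℝ) ^ (-(1:ℝ)/d) := by
  rw [rpow_aux' hK n hn, ← rpow_cancel' hd ha]
  exact Real.rpow_le_rpow (by positivity) h (by positivity)

theorem minDist_eq_infDist' {E : Type*} [NormedAddCommGroup E] (D : Finset E) (y : E) :
    minDist D y = Metric.infDist y (D : Set E) := by
  rw [minDist, Metric.infDist_eq_iInf, iInf, ← Set.image_eq_range]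

theorem sepRad_facts' {E : Type*} [NormedAddCommGroup E] (D : Finset E)
    (h2 : ∃ p ∈ D, ∃ q ∈ D, p ≠ q) :
    (∃ p ∈ D, ∃ q ∈ D, p ≠ q ∧ sepRad D = dist p q / 2) ∧
    (∀ p ∈ D, ∀ q ∈ D, p ≠ q → sepRad D ≤ dist p q / 2) := by
  set P : Set (E × E) := {p | p.1 ∈ D ∧ p.2 ∈ D ∧ p.1 ≠ p.2} with hP
  have hfin : P.Finite := Set.Finite.subset (D.finite_toSet.prod D.finite_toSet)
    (fun p hp => ⟨hp.1, hp.2.1⟩)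
  have hifin : ((fun p : E × E => dist p.1 p.2) '' P).Finite := hfin.image _
  obtain ⟨p, hp, q, hq, hpq⟩ := h2
  have hne : ((fun p : E × E => dist p.1 p.2) '' P).Nonempty :=
    ⟨dist p q, ⟨(p, q), ⟨hp, hq, hpq⟩, rfl⟩⟩
  obtain ⟨⟨a, b⟩, ⟨ha, hb, hab⟩, heq⟩ := hne.csInf_mem hifin
  constructor
  · exact ⟨a, ha, b, hb, hab, by rw [sepRad, ← heq]; ring⟩
  · intro p hp q hq hpq
    have := csInf_le hifin.bddBelow (⟨(p, q), ⟨hp, hq, hpq⟩, rfl⟩ :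
      dist p q ∈ (fun p : E × E => dist p.1 p.2) '' P)
    rw [sepRad]; linarith

/-- For any quasi-uniform sequence of nested designs with uniformity
constant `ρ` in a compact set `S ⊆ ℝ^d` with `vol(S) > 0`, there exist positive constants
`c₁, c₂` with `c₁ n^{-1/d} ≤ CR(Xₙ) ≤ ρ·SR(Xₙ) ≤ c₂ n^{-1/d}` for all `n ≥ 2`. -/
theorem statement3 {d : ℕ} (hd : 1 ≤ d)
    {E : Type*} [NormedAddCommGroup E] [NormedSpace ℝ E] [FiniteDimensional ℝ E]
    [MeasurableSpace E] [BorelSpace E] (hdim : Module.finrank ℝ E = d)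
    (S : Set E) (hS : IsCompact S) (hvol : 0 < (Measure.addHaar : Measure E) S)
    (x : ℕ → E) (hinj : Function.Injective x) (hmem : ∀ n, x n ∈ S)
    (ρ : ℝ) (hρ : ∀ n, 2 ≤ n → meshRatio S (design x n) ≤ ρ) :
    ∃ c₁ c₂ : ℝ, 0 < c₁ ∧ 0 < c₂ ∧ ∀ n : ℕ, 2 ≤ n →
      c₁ * (n : ℝ) ^ (-(1 : ℝ) / d) ≤ fillDist S (design x n) ∧
      fillDist S (design x n) ≤ ρ * sepRad (design x n) ∧
      ρ * sepRad (design x n) ≤ c₂ * (n : ℝ) ^ (-(1 : ℝ) / d) := by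
  classical
  haveI : Nontrivial E := Module.nontrivial_of_finrank_pos (R := ℝ) (by rw [hdim]; omega)
  set μ : Measure E := Measure.addHaar with hμ
  have hSne : S.Nonempty := nonempty_of_measure_ne_zero hvol.ne'
  have hμS_top : μ S < ⊤ := hS.measure_lt_top
  set V : ℝ := (μ S).toReal with hVdef
  have hV : 0 < V := ENNReal.toReal_pos hvol.ne' hμS_top.ne
  set B : ℝ≥0∞ := μ (ball (0:E) 1) with hBdef
  have hB0 : 0 < B := measure_ball_pos μ 0 one_pos
  have hBtop : B < ⊤ := measure_ball_lt_top
  set Bv : ℝ := B.toReal with hBvdef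
  have hBv : 0 < Bv := ENNReal.toReal_pos hB0.ne' hBtop.ne
  set R : ℝ := diam S with hRdef
  have hR : 0 < R := lt_of_lt_of_le (dist_pos.2 (hinj.ne (by norm_num : (0:ℕ) ≠ 1)))
    (dist_le_diam_of_mem hS.isBounded (hmem 0) (hmem 1))
  have hRdiam : ∀ p ∈ S, ∀ q ∈ S, dist p q ≤ R := fun p hp q hq =>
    dist_le_diam_of_mem hS.isBounded hp hq
  set K₁ : ℝ := V / Bv with hK₁def
  have hK₁ : 0 < K₁ := div_pos hV hBv
  set K₂ : ℝ := (2 * R) ^ d with hK₂def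
  have hK₂ : 0 < K₂ := by positivity
  set c₁ : ℝ := K₁ ^ ((1:ℝ)/d) with hc₁def
  have hc₁ : 0 < c₁ := Real.rpow_pos_of_pos hK₁ _
  have key : ∀ n : ℕ, 2 ≤ n →
      c₁ * (n : ℝ) ^ (-(1 : ℝ) / d) ≤ fillDist S (design x n) ∧
      0 < sepRad (design x n) ∧
      sepRad (design x n) ≤ K₂ ^ ((1:ℝ)/d) * (n : ℝ) ^ (-(1:ℝ)/d) := by
    intro n hn
    set D : Finset E := design x n with hDdef
    have hn1 : 1 ≤ n := by omega
    have hn0 : (0:ℝ) < n := by exact_mod_cast hn1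
    have hDcard : D.card = n := by
      rw [hDdef]; unfold design
      rw [Finset.card_image_of_injective _ hinj, Finset.card_range]
    have hmemD : ∀ i, i < n → x i ∈ D := by
      intro i hi; rw [hDdef]; unfold design
      exact Finset.mem_image.2 ⟨i, Finset.mem_range.2 hi, rfl⟩
    have hDsub : (D : Set E) ⊆ S := by
      intro y hy
      rw [hDdef] at hy; unfold design at hy
      obtain ⟨i, _, rfl⟩ := Finset.mem_image.1 hy
      exact hmem i
    have hDne : (D : Set E).Nonempty := ⟨x 0, hmemD 0 (by omega)⟩
    have h2 : ∃ p ∈ D, ∃ q ∈ D, p ≠ q :=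
      ⟨x 0, hmemD 0 (by omega), x 1, hmemD 1 (by omega), hinj.ne (by norm_num)⟩
    -- fillDist lower bound (covering argument)
    have hcont : Continuous fun y : E => Metric.infDist y (D : Set E) :=
      continuous_infDist_pt _
    have himg : (fun y => minDist D y) '' S = (fun y => Metric.infDist y (D : Set E)) '' S :=
      Set.image_congr fun y _ => minDist_eq_infDist' D y
    have hbdd : BddAbove ((fun y => Metric.infDist y (D : Set E)) '' S) :=
      (hS.image hcont).bddAbove
    have hle : ∀ y ∈ S, Metric.infDist y (D : Set E) ≤ fillDist S D := by
      intro y hy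
      rw [fillDist, himg]
      exact le_csSup hbdd ⟨y, hy, rfl⟩
    set h : ℝ := fillDist S D with hhdef
    have hh0 : 0 ≤ h :=
      le_trans Metric.infDist_nonneg (hle _ hSne.choose_spec)
    have hcover : S ⊆ ⋃ p ∈ D, closedBall p h := by
      intro y hy
      obtain ⟨p, hp, hdp⟩ := D.finite_toSet.isCompact.exists_infDist_eq_dist hDne y
      exact Set.mem_biUnion hp (mem_closedBall.2 (hdp ▸ hle y hy))
    have hmeas : μ S ≤ (n : ℝ≥0∞) * (ENNReal.ofReal (h ^ d) * B) := by
      calc μ S ≤ μ (⋃ p ∈ D, closedBall p h) := measure_mono hcover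
        _ ≤ ∑ p ∈ D, μ (closedBall p h) := measure_biUnion_finset_le D _
        _ = ∑ _p ∈ D, ENNReal.ofReal (h ^ d) * B := by
            refine Finset.sum_congr rfl fun p _ => ?_
            rw [hμ, Measure.addHaar_closedBall _ p hh0, hdim]
        _ = (n : ℝ≥0∞) * (ENNReal.ofReal (h ^ d) * B) := by
            rw [Finset.sum_const, hDcard, nsmul_eq_mul]
    have hreal : V ≤ (n : ℝ) * (h ^ d * Bv) := by
      have hfin : (n : ℝ≥0∞) * (ENNReal.ofReal (h ^ d) * B) ≠ ⊤ :=
        ENNReal.mul_ne_top (ENNReal.natCast_ne_top n)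
          (ENNReal.mul_ne_top ENNReal.ofReal_ne_top hBtop.ne)
      have := ENNReal.toReal_mono hfin hmeas
      rwa [ENNReal.toReal_mul, ENNReal.toReal_mul, ENNReal.toReal_natCast,
        ENNReal.toReal_ofReal (by positivity)] at this
    have hKn : K₁ / n ≤ h ^ d := by
      rw [hK₁def, div_div, div_le_iff₀ (by positivity : (0:ℝ) < Bv * n)]
      nlinarith [hreal]
    have hlow : c₁ * (n : ℝ) ^ (-(1:ℝ)/d) ≤ h := aux_lower' hd hh0 hK₁.le n hn1 hKn
    -- sepRad upper bound (packing argument)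
    obtain ⟨⟨p₀, hp₀, q₀, hq₀, hpq₀, hsep_eq⟩, hsep_le⟩ := sepRad_facts' D h2
    set r : ℝ := sepRad D with hrdef
    have hr0 : 0 < r := by
      rw [hsep_eq]
      have := dist_pos.2 hpq₀
      linarith
    have hrR : r ≤ R := by
      have := hRdiam p₀ (hDsub hp₀) q₀ (hDsub hq₀)
      rw [hsep_eq]; linarith
    have hdisj : (D : Set E).PairwiseDisjoint (fun p => ball p r) := by
      intro p hp q hq hpq
      exact ball_disjoint_ball (by have := hsep_le p hp q hq hpq; linarith)
    have hsub : ⋃ p ∈ D, ball p r ⊆ closedBall (x 0) (2 * R) := by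
      refine Set.iUnion₂_subset fun p hp y hy => ?_
      have h1 : dist y p < r := mem_ball.1 hy
      have h2 : dist p (x 0) ≤ R := hRdiam p (hDsub hp) (x 0) (hmem 0)
      have := dist_triangle y p (x 0)
      exact mem_closedBall.2 (by linarith)
    have hpack : (n : ℝ≥0∞) * (ENNReal.ofReal (r ^ d) * B) ≤
        ENNReal.ofReal ((2 * R) ^ d) * B := by
      calc (n : ℝ≥0∞) * (ENNReal.ofReal (r ^ d) * B)
          = ∑ p ∈ D, μ (ball p r) := by
            rw [Finset.sum_congr rfl fun p _ => by
              rw [hμ, Measure.addHaar_ball _ p hr0.le, hdim]]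
            rw [Finset.sum_const, hDcard, nsmul_eq_mul]
        _ = μ (⋃ p ∈ D, ball p r) :=
            (measure_biUnion_finset hdisj fun p _ => measurableSet_ball).symm
        _ ≤ μ (closedBall (x 0) (2 * R)) := measure_mono hsub
        _ = ENNReal.ofReal ((2 * R) ^ d) * B := by
            rw [hμ, Measure.addHaar_closedBall _ _ (by positivity), hdim]
    have hrealp : (n : ℝ) * (r ^ d * Bv) ≤ (2 * R) ^ d * Bv := by
      have hfin : ENNReal.ofReal ((2 * R) ^ d) * B ≠ ⊤ :=
        ENNReal.mul_ne_top ENNReal.ofReal_ne_top hBtop.ne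
      have := ENNReal.toReal_mono hfin hpack
      rwa [ENNReal.toReal_mul, ENNReal.toReal_mul, ENNReal.toReal_mul, ENNReal.toReal_natCast,
        ENNReal.toReal_ofReal (by positivity), ENNReal.toReal_ofReal (by positivity)] at this
    have hKn2 : r ^ d ≤ K₂ / n := by
      rw [hK₂def, le_div_iff₀ hn0]
      nlinarith [hrealp]
    exact ⟨hlow, hr0, aux_upper' hd hr0.le hK₂.le n hn1 hKn2⟩
  -- ρ is positive
  have hρpos : 0 < ρ := by
    obtain ⟨h1, h2, _⟩ := key 2 le_rfl
    have hfillpos : 0 < fillDist S (design x 2) :=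
      lt_of_lt_of_le (by positivity) h1
    have := hρ 2 le_rfl
    rw [meshRatio] at this
    exact lt_of_lt_of_le (div_pos hfillpos h2) this
  refine ⟨c₁, ρ * K₂ ^ ((1:ℝ)/d), hc₁,
    mul_pos hρpos (Real.rpow_pos_of_pos hK₂ _), fun n hn => ?_⟩
  obtain ⟨h1, h2, h3⟩ := key n hn
  refine ⟨h1, ?_, ?_⟩
  · have := hρ n hn
    rw [meshRatio, div_le_iff₀ h2] at this
    linarith [this]
  · calc ρ * sepRad (design x n) ≤ ρ * (K₂ ^ ((1:ℝ)/d) * (n : ℝ) ^ (-(1:ℝ)/d)) :=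
        mul_le_mul_of_nonneg_left h3 hρpos.le
      _ = ρ * K₂ ^ ((1:ℝ)/d) * (n : ℝ) ^ (-(1:ℝ)/d) := by ring
end
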